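/- Let (K, v) be a valued field, L, K' valued field extensions of K inside a common valued field U, with L/K a separated extension. If v(L) ∩ v(K') = v(K) and the residue fields res(L) and res(K') are linearly disjoint over res(K), then any tuple (b_1,...,b_n) from L that is valuation independent over K remains valuation independent over K'. In particular, L and K' are linearly disjoint over K. -/

import Mathlib

/-- `b` is valuation independent over the subfield `F` (multiplicative convention:
`v (∑ aᵢ bᵢ)` equals the *maximum* of the `v (aᵢ bᵢ)`; since `v (∑ aᵢ bᵢ) ≤ max` is
automatic for a valuation, this is expressed as `∀ i, v (aᵢ bᵢ) ≤ v (∑ aᵢ bᵢ)`). -/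
def ValIndep {U Γ₀ : Type*} [Field U] [LinearOrderedCommGroupWithZero Γ₀]
    (v : Valuation U Γ₀) (F : Subfield U) {n : ℕ} (b : Fin n → U) : Prop :=
  ∀ a : Fin n → U, (∀ i, a i ∈ F) → ∀ i, v (a i * b i) ≤ v (∑ j, a j * b j)

/-- `b` is linearly independent over the subfield `F`. -/
def LinIndepOver {U : Type*} [Field U] (F : Subfield U) {n : ℕ} (b : Fin n → U) : Prop :=
  ∀ a : Fin n → U, (∀ i, a i ∈ F) → (∑ i, a i * b i) = 0 → ∀ i, a i = 0

/-- `x` lies in the `F`-linear span of the tuple `c`. -/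
def InSpan {U : Type*} [Field U] (F : Subfield U) {n : ℕ} (c : Fin n → U) (x : U) : Prop :=
  ∃ a : Fin n → U, (∀ i, a i ∈ F) ∧ x = ∑ i, a i * c i

/-- The residues of the tuple `x` (of elements of the valuation ring) are linearly
independent over the residue field of the subfield `F`. -/
def ResIndep {U Γ₀ : Type*} [Field U] [LinearOrderedCommGroupWithZero Γ₀]
    (v : Valuation U Γ₀) (F : Subfield U) {n : ℕ} (x : Fin n → U) : Prop :=
  ∀ a : Fin n → U, (∀ i, a i ∈ F) → (∀ i, v (a i) ≤ 1) →
    v (∑ i, a i * x i) < 1 → ∀ i, v (a i) < 1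

private theorem valdis_aux1 {U Γ₀ : Type*} [Field U] [LinearOrderedCommGroupWithZero Γ₀]
    (v : Valuation U Γ₀) (K L K' : Subfield U) (hKL : K ≤ L) (hKK' : K ≤ K')
    (hval : ∀ x ∈ L, ∀ y ∈ K', x ≠ 0 → y ≠ 0 → v x = v y →
      ∃ z ∈ K, z ≠ (0 : U) ∧ v z = v x)
    (hres : ∀ (n : ℕ) (x : Fin n → U), (∀ i, x i ∈ L) → (∀ i, v (x i) ≤ 1) →
      ResIndep v K x → ResIndep v K' x)
    (n : ℕ) (b : Fin n → U) (hbL : ∀ i, b i ∈ L) (hb : ValIndep v K b) :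
    ValIndep v K' b := by
  classical
  intro a ha i
  have hne : Nonempty (Fin n) := ⟨i⟩
  obtain ⟨i₀, hi₀⟩ := Finite.exists_max (fun j => v (a j * b j))
  set M := v (a i₀ * b i₀) with hM
  rcases eq_or_ne M 0 with hM0 | hM0
  · have : v (a i * b i) = 0 := le_antisymm (hM0 ▸ hi₀ i) zero_le'
    rw [this]; exact zero_le'
  -- M ≠ 0
  have hab0 : a i₀ * b i₀ ≠ 0 := fun h => hM0 (by rw [hM, h, map_zero])
  have ha0 : a i₀ ≠ 0 := fun h => hab0 (by rw [h, zero_mul])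
  have hb0 : b i₀ ≠ 0 := fun h => hab0 (by rw [h, mul_zero])
  have hβ : v (b i₀) ≠ 0 := (Valuation.ne_zero_iff v).2 hb0
  set β := v (b i₀) with hβdef
  set I : Finset (Fin n) := Finset.univ.filter (fun j => v (a j * b j) = M) with hI
  have hi₀I : i₀ ∈ I := Finset.mem_filter.2 ⟨Finset.mem_univ _, rfl⟩
  have hImem : ∀ j ∈ I, v (a j * b j) = M := fun j hj => (Finset.mem_filter.1 hj).2
  have haj0 : ∀ j ∈ I, a j ≠ 0 := by
    intro j hj h
    exact hM0 (by rw [← hImem j hj, h, zero_mul, map_zero])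
  have hbj0 : ∀ j ∈ I, b j ≠ 0 := by
    intro j hj h
    exact hM0 (by rw [← hImem j hj, h, mul_zero, map_zero])
  -- choose z
  have hz : ∀ j : {j // j ∈ I}, ∃ z, z ∈ K ∧ z ≠ (0:U) ∧ v z = v (b j.1) / β := by
    rintro ⟨j, hj⟩
    have hx : (b j / b i₀ : U) ∈ L := div_mem (hbL j) (hbL i₀)
    have hy : (a i₀ / a j : U) ∈ K' := div_mem (ha i₀) (ha j)
    have hx0 : (b j / b i₀ : U) ≠ 0 := div_ne_zero (hbj0 j hj) hb0
    have hy0 : (a i₀ / a j : U) ≠ 0 := div_ne_zero ha0 (haj0 j hj)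
    have hvaj0 : v (a j) ≠ 0 := (Valuation.ne_zero_iff v).2 (haj0 j hj)
    have hvv : v (b j / b i₀) = v (a i₀ / a j) := by
      rw [map_div₀, map_div₀, (Commute.all _ _).div_eq_div_iff hβ hvaj0]
      have h1 : v (a j) * v (b j) = v (a i₀) * v (b i₀) := by
        rw [← map_mul, ← map_mul]; exact hImem j hj
      rw [mul_comm (v (b j)) (v (a j)), h1, mul_comm]
    obtain ⟨z, hzK, hz0, hzv⟩ := hval _ hx _ hy hx0 hy0 hvv
    exact ⟨z, hzK, hz0, by rw [hzv, map_div₀]⟩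
  choose z hzK hz0 hzv using hz
  have hvz0 : ∀ j, v (z j) ≠ 0 := fun j => (Valuation.ne_zero_iff v).2 (hz0 j)
  have hvbj0 : ∀ j : {j // j ∈ I}, v (b j.1) ≠ 0 :=
    fun j => (Valuation.ne_zero_iff v).2 (hbj0 j.1 j.2)
  set m := I.card with hm
  set σ : Fin m → {j // j ∈ I} := fun k => I.equivFin.symm k with hσ
  set x : Fin m → U := fun k => b (σ k).1 / (z (σ k) * b i₀) with hx
  have hxL : ∀ k, x k ∈ L := fun k =>
    div_mem (hbL _) (mul_mem (hKL (hzK _)) (hbL i₀))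
  have hzb : ∀ j : {j // j ∈ I}, v (z j) * β = v (b j.1) := fun j => by
    rw [hzv j]; exact div_mul_cancel₀ _ hβ
  have hxv : ∀ k, v (x k) = 1 := by
    intro k
    rw [hx]; dsimp only
    rw [map_div₀, map_mul, hzb, div_self (hvbj0 _)]
  -- reindexing lemma
  have hsum : ∀ g : Fin n → U, ∑ k, g (σ k).1 = ∑ j ∈ I, g j := by
    intro g
    rw [← Finset.sum_coe_sort I g]
    exact Equiv.sum_comp I.equivFin.symm (fun j => g j.1)
  -- Claim A : residues of x are linearly independent over K
  have hA : ResIndep v K x := by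
    intro t htK ht1 htlt k
    set T : Fin n → U := fun j =>
      if h : j ∈ I then t (I.equivFin ⟨j, h⟩) / z ⟨j, h⟩ else 0 with hT
    have hTK : ∀ j, T j ∈ K := by
      intro j; rw [hT]; dsimp only
      split
      · exact div_mem (htK _) (hzK _)
      · exact zero_mem K
    have hσT : ∀ k : Fin m, T (σ k).1 = t k / z (σ k) := by
      intro k
      have h1 : T (σ k).1 = t (I.equivFin (σ k)) / z (σ k) := dif_pos (σ k).2
      rw [h1, hσ]; dsimp only; rw [Equiv.apply_symm_apply]
    have hTsum : ∑ j, T j * b j = b i₀ * ∑ k, t k * x k := by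
      have h1 : ∑ j, T j * b j = ∑ j ∈ I, T j * b j := by
        refine (Finset.sum_subset (Finset.subset_univ I) ?_).symm
        intro j _ hj
        rw [hT]; dsimp only; rw [dif_neg hj, zero_mul]
      rw [h1, ← hsum (fun j => T j * b j), Finset.mul_sum]
      refine Finset.sum_congr rfl ?_
      intro k _
      rw [hσT k, hx]; dsimp only
      have hzk0 : z (σ k) ≠ 0 := hz0 _
      field_simp
    have key := hb T hTK (σ k).1
    rw [hTsum] at key
    have hlt : v (T (σ k).1 * b (σ k).1) < β := by
      refine lt_of_le_of_lt key ?_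
      rw [map_mul]
      have h2 : v (b i₀) * v (∑ k, t k * x k) < v (b i₀) * 1 :=
        mul_lt_mul_of_pos_left htlt (zero_lt_iff.2 hβ)
      rwa [mul_one] at h2
    have hveq : v (T (σ k).1 * b (σ k).1) = v (t k) * β := by
      rw [hσT k, map_mul, map_div₀, ← hzb (σ k), ← mul_assoc,
        div_mul_cancel₀ _ (hvz0 (σ k))]
    rw [hveq] at hlt
    by_contra hc
    push_neg at hc
    have h3 : (1:Γ₀) * β ≤ v (t k) * β := mul_le_mul_left hc β
    rw [one_mul] at h3
    exact absurd (lt_of_le_of_lt h3 hlt) (lt_irrefl _)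
  have hA' : ResIndep v K' x := hres m x hxL (fun k => le_of_eq (hxv k)) hA
  -- Claim B
  set z₀ := z ⟨i₀, hi₀I⟩ with hz₀def
  have hvz₀ : v z₀ = 1 := by
    rw [hz₀def, hzv]; exact div_self hβ
  set u : Fin m → U := fun k => (a (σ k).1 * z (σ k)) / (a i₀ * z₀) with hu
  have huK' : ∀ k, u k ∈ K' := fun k =>
    div_mem (mul_mem (ha _) (hKK' (hzK _))) (mul_mem (ha i₀) (hKK' (hzK _)))
  have hnum : ∀ j : {j // j ∈ I}, v (a j.1) * v (z j) = M / β := by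
    intro j
    rw [hzv j, mul_div_assoc']
    congr 1
    rw [← map_mul]; exact hImem j.1 j.2
  have hvu : ∀ k, v (u k) = 1 := by
    intro k
    rw [hu]; dsimp only
    rw [map_div₀, map_mul, map_mul, hnum (σ k), hnum ⟨i₀, hi₀I⟩]
    exact div_self (div_ne_zero hM0 hβ)
  obtain ⟨k₀, hk₀⟩ : ∃ k₀, σ k₀ = ⟨i₀, hi₀I⟩ :=
    ⟨I.equivFin ⟨i₀, hi₀I⟩, by rw [hσ]; exact Equiv.symm_apply_apply _ _⟩
  have hTge : (1:Γ₀) ≤ v (∑ k, u k * x k) := by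
    by_contra hc
    push_neg at hc
    have h4 := hA' u huK' (fun k => le_of_eq (hvu k)) hc k₀
    rw [hvu k₀] at h4
    exact absurd h4 (lt_irrefl _)
  have hIsum : ∑ j ∈ I, a j * b j = (a i₀ * z₀ * b i₀) * ∑ k, u k * x k := by
    rw [← hsum (fun j => a j * b j), Finset.mul_sum]
    refine Finset.sum_congr rfl ?_
    intro k _
    rw [hu, hx]; dsimp only
    have hz₀0 : z₀ ≠ 0 := hz0 _
    have hzk0 : z (σ k) ≠ 0 := hz0 _
    field_simp
  have hvI : M ≤ v (∑ j ∈ I, a j * b j) := by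
    rw [hIsum, map_mul]
    have hv1 : v (a i₀ * z₀ * b i₀) = M := by
      rw [map_mul, map_mul, hvz₀, mul_one, ← map_mul]
    rw [hv1]
    calc M = M * 1 := (mul_one M).symm
      _ ≤ M * v (∑ k, u k * x k) := mul_le_mul_right hTge M
  have hrest : v (∑ j ∈ Finset.univ.filter (fun j => ¬ v (a j * b j) = M),
      a j * b j) < M := by
    apply Valuation.map_sum_lt v hM0
    intro j hj
    rcases Finset.mem_filter.1 hj with ⟨-, hne2⟩
    exact lt_of_le_of_ne (hi₀ j) hne2
  have hsplit : ∑ j, a j * b j = (∑ j ∈ I, a j * b j) +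
      ∑ j ∈ Finset.univ.filter (fun j => ¬ v (a j * b j) = M), a j * b j := by
    rw [hI]
    exact (Finset.sum_filter_add_sum_filter_not Finset.univ _ _).symm
  have hfinal : v (∑ j, a j * b j) = v (∑ j ∈ I, a j * b j) := by
    rw [hsplit]
    exact Valuation.map_add_eq_of_lt_left v (lt_of_lt_of_le hrest hvI)
  rw [hfinal]
  exact le_trans (hi₀ i) hvI

private theorem valdis_aux2 {U Γ₀ : Type*} [Field U] [LinearOrderedCommGroupWithZero Γ₀]
    (v : Valuation U Γ₀) (K K' : Subfield U) (hKK' : K ≤ K')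
    (n : ℕ) (b c : Fin n → U) (hb : LinIndepOver K b)
    (hcVI : ValIndep v K' c)
    (hbc : ∀ j, InSpan K c (b j)) (hcb : ∀ j, InSpan K b (c j)) :
    LinIndepOver K' b := by
  classical
  choose d hdK hd using hbc
  choose e heK he using hcb
  -- D * E = 1
  have hDE : ∀ j k, (∑ i, d j i * e i k) = if j = k then (1:U) else 0 := by
    intro j k
    have hAK : ∀ l, (∑ i, d j i * e i l) - (if j = l then (1:U) else 0) ∈ K := by
      intro l
      refine sub_mem (sum_mem (fun i _ => mul_mem (hdK j i) (heK i l))) ?_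
      split
      · exact one_mem K
      · exact zero_mem K
    have hAsum : ∑ l, ((∑ i, d j i * e i l) - (if j = l then (1:U) else 0)) * b l = 0 := by
      have h1 : ∑ l, (∑ i, d j i * e i l) * b l = b j := by
        simp_rw [Finset.sum_mul, mul_assoc]
        rw [Finset.sum_comm]
        simp_rw [← Finset.mul_sum, ← he]
        exact (hd j).symm
      have h2 : ∑ l, (if j = l then (1:U) else 0) * b l = b j := by
        simp [ite_mul]
      simp_rw [sub_mul, Finset.sum_sub_distrib, h1, h2, sub_self]
    have h3 := hb _ hAK hAsum k
    have h4 := sub_eq_zero.1 h3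
    exact h4
  have hED : ∀ i k, (∑ j, e i j * d j k) = if i = k then (1:U) else 0 := by
    have hDE' : (Matrix.of d) * (Matrix.of e) = 1 := by
      ext j k
      rw [Matrix.mul_apply]
      simpa [Matrix.one_apply] using hDE j k
    have h := mul_eq_one_comm.1 hDE'
    intro i k
    have h2 := congrArg (fun M => M i k) h
    simpa [Matrix.mul_apply, Matrix.one_apply] using h2
  -- c i ≠ 0
  have hc0 : ∀ i, c i ≠ 0 := by
    intro i hci
    have h5 : ∑ j, e i j * b j = 0 := by rw [← he i, hci]
    have h6 : ∀ j, e i j = 0 := hb _ (heK i) h5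
    have h7 := hED i i
    rw [if_pos rfl] at h7
    simp only [h6, zero_mul, Finset.sum_const_zero] at h7
    exact one_ne_zero h7.symm
  -- main argument
  intro a ha hsum0 k
  set a' : Fin n → U := fun i => ∑ j, a j * d j i with ha'def
  have ha'K' : ∀ i, a' i ∈ K' :=
    fun i => sum_mem (fun j _ => mul_mem (ha j) (hKK' (hdK j i)))
  have hsum' : ∑ i, a' i * c i = 0 := by
    rw [ha'def]; dsimp only
    simp_rw [Finset.sum_mul, mul_assoc]
    rw [Finset.sum_comm]
    simp_rw [← Finset.mul_sum, ← hd]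
    exact hsum0
  have ha'0 : ∀ i, a' i = 0 := by
    intro i
    have h8 := hcVI a' ha'K' i
    rw [hsum', map_zero, le_zero_iff, Valuation.zero_iff, mul_eq_zero] at h8
    rcases h8 with h | h
    · exact h
    · exact absurd h (hc0 i)
  have hak : a k = ∑ i, a' i * e i k := by
    rw [ha'def]; dsimp only
    simp_rw [Finset.sum_mul, mul_assoc]
    rw [Finset.sum_comm]
    simp_rw [← Finset.mul_sum, hDE]
    simp
  rw [hak]
  simp [ha'0]

/-- Let `K ⊆ L, K' ⊆ U` be valued fields with `L/K` separated.  If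
`v(L) ∩ v(K') = v(K)` and the residue fields of `L` and `K'` are linearly disjoint over
the residue field of `K`, then every tuple from `L` which is valuation independent over
`K` remains valuation independent over `K'`; in particular `L` and `K'` are linearly
disjoint over `K`. -/
theorem valuatively_disjoint {U Γ₀ : Type*} [Field U] [LinearOrderedCommGroupWithZero Γ₀]
    (v : Valuation U Γ₀) (K L K' : Subfield U) (hKL : K ≤ L) (hKK' : K ≤ K')
    -- `L/K` is separated: every `K`-linearly independent tuple from `L` spans (over `K`)
    -- a subspace admitting a valuation basis.
    (hsep : ∀ (n : ℕ) (x : Fin n → U), (∀ i, x i ∈ L) → LinIndepOver K x →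
      ∃ c : Fin n → U, (∀ i, c i ∈ L) ∧ ValIndep v K c ∧
        (∀ j, InSpan K c (x j)) ∧ (∀ j, InSpan K x (c j)))
    -- `v(L) ∩ v(K') = v(K)`.
    (hval : ∀ x ∈ L, ∀ y ∈ K', x ≠ 0 → y ≠ 0 → v x = v y →
      ∃ z ∈ K, z ≠ (0 : U) ∧ v z = v x)
    -- `res(L)` and `res(K')` are linearly disjoint over `res(K)`.
    (hres : ∀ (n : ℕ) (x : Fin n → U), (∀ i, x i ∈ L) → (∀ i, v (x i) ≤ 1) →
      ResIndep v K x → ResIndep v K' x) :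
    (∀ (n : ℕ) (b : Fin n → U), (∀ i, b i ∈ L) → ValIndep v K b → ValIndep v K' b) ∧
    (∀ (n : ℕ) (b : Fin n → U), (∀ i, b i ∈ L) → LinIndepOver K b → LinIndepOver K' b) := by
  classical
  have hP1 : ∀ (n : ℕ) (b : Fin n → U), (∀ i, b i ∈ L) → ValIndep v K b → ValIndep v K' b :=
    fun n b hbL hbVI => valdis_aux1 v K L K' hKL hKK' hval hres n b hbL hbVI
  refine ⟨hP1, ?_⟩
  intro n b hbL hb
  obtain ⟨c, hcL, hcVI, hbc, hcb⟩ := hsep n b hbL hb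
  exact valdis_aux2 v K K' hKK' n b c hb (hP1 n c hcL hcVI) hbc hcb
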